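/- For every integer n ≥ 1, the quantity C_1(n) = 4 + 2·∑_{k=2}^{n} 4(k-1)·⌈(2n+2)/(2k-2)⌉ + 4n·⌈(2n+2)/(2n)⌉ satisfies C_1(n) ≤ 12n² + 4n − 4. -/

import Mathlib

lemma term_bound18 (n k : ℕ) (hk : 2 ≤ k) :
    4 * ((k : ℤ) - 1) * ⌈(2 * (n : ℚ) + 2) / (2 * k - 2)⌉ ≤ 4 * ((n : ℤ) + k - 1) := by
  have hk1 : (2 : ℚ) ≤ (k : ℚ) := by exact_mod_cast hk
  have hd : (0 : ℚ) < 2 * (k : ℚ) - 2 := by linarith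
  set x : ℚ := (2 * (n : ℚ) + 2) / (2 * k - 2) with hxdef
  have hc : (⌈x⌉ : ℚ) < x + 1 := Int.ceil_lt_add_one x
  have hx : (2 * (k : ℚ) - 2) * x = 2 * n + 2 := by
    rw [hxdef]; field_simp
    exact div_self (ne_of_gt (by linarith))
  have hpos : (0 : ℚ) < (k : ℚ) - 1 := by linarith
  have h2 : ((k : ℚ) - 1) * ⌈x⌉ < (n : ℚ) + k := by
    nlinarith [mul_lt_mul_of_pos_left hc hpos]
  have h3 : ((k : ℤ) - 1) * ⌈x⌉ < (n : ℤ) + k := by exact_mod_cast h2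
  nlinarith [h3]

lemma sum_eq18 (n : ℕ) :
    ∑ k ∈ Finset.Icc 2 n, (4 * ((n : ℤ) + k - 1)) = 6 * (n : ℤ) ^ 2 - 6 * n := by
  induction n with
  | zero => simp
  | succ m ih =>
    rcases Nat.lt_or_ge m 1 with hm | hm
    · interval_cases m <;> simp
    · rw [Finset.sum_Icc_succ_top (by omega : 2 ≤ m + 1)]
      have h1 : ∑ k ∈ Finset.Icc 2 m, (4 * (((m + 1 : ℕ) : ℤ) + k - 1))
          = (∑ k ∈ Finset.Icc 2 m, (4 * ((m : ℤ) + k - 1))) + 4 * ((m : ℤ) - 1) := by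
        have step : ∀ k ∈ Finset.Icc 2 m, (4 * (((m + 1 : ℕ) : ℤ) + k - 1))
            = 4 * ((m : ℤ) + k - 1) + 4 := by
          intro k _; push_cast; ring
        rw [Finset.sum_congr rfl step, Finset.sum_add_distrib, Finset.sum_const,
          Nat.card_Icc]
        rw [nsmul_eq_mul]
        have hcast : ((m + 1 - 2 : ℕ) : ℤ) = (m : ℤ) - 1 := by omega
        rw [hcast]; ring
      rw [h1, ih]; push_cast; ring

theorem stmt_18 (n : ℕ) (hn : 1 ≤ n) :
    (4 : ℤ) + 2 * ∑ k ∈ Finset.Icc 2 n, 4 * ((k : ℤ) - 1) * ⌈(2 * (n : ℚ) + 2) / (2 * k - 2)⌉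
        + 4 * n * ⌈(2 * (n : ℚ) + 2) / (2 * n)⌉
      ≤ 12 * (n : ℤ) ^ 2 + 4 * n - 4 := by
  have hsum : ∑ k ∈ Finset.Icc 2 n, 4 * ((k : ℤ) - 1) * ⌈(2 * (n : ℚ) + 2) / (2 * k - 2)⌉
      ≤ 6 * (n : ℤ) ^ 2 - 6 * n := by
    calc ∑ k ∈ Finset.Icc 2 n, 4 * ((k : ℤ) - 1) * ⌈(2 * (n : ℚ) + 2) / (2 * k - 2)⌉
        ≤ ∑ k ∈ Finset.Icc 2 n, (4 * ((n : ℤ) + k - 1)) := by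
          apply Finset.sum_le_sum
          intro k hk
          exact term_bound18 n k (Finset.mem_Icc.mp hk).1
      _ = 6 * (n : ℤ) ^ 2 - 6 * n := sum_eq18 n
  have hceil : ⌈(2 * (n : ℚ) + 2) / (2 * n)⌉ ≤ 2 := by
    apply Int.ceil_le.mpr
    have hn' : (1 : ℚ) ≤ (n : ℚ) := by exact_mod_cast hn
    rw [div_le_iff₀ (by linarith)]
    push_cast
    linarith
  have hn' : (1 : ℤ) ≤ (n : ℤ) := by exact_mod_cast hn
  nlinarith [hsum, hceil, hn']
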